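/- Let n ≥ 1 and let A^1, A^2, …, A^n be finite simple graphs containing no isolated vertices. Then the product γ_t(A^1)·γ_t(A^2)···γ_t(A^n) is at most n·γ_t(A^1 □ A^2 □ ⋯ □ A^n). -/

import Mathlib

open SimpleGraph

/-- `D` is a total dominating set of `G`: every vertex has a neighbor in `D`. -/
def IsTotalDomSet {V : Type*} (G : SimpleGraph V) (D : Finset V) : Prop :=
  ∀ v : V, ∃ u ∈ D, G.Adj u v

/-- The total domination number `γ_t(G)`. -/
noncomputable def totalDomNum {V : Type*} [Fintype V] (G : SimpleGraph V) : ℕ :=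
  sInf {k : ℕ | ∃ D : Finset V, IsTotalDomSet G D ∧ D.card = k}

/-- The `n`-fold Cartesian (box) product `A^1 □ A^2 □ ⋯ □ A^n` of a family of graphs:
vertices `u` and `v` are adjacent iff there is an index `i` with `(u i, v i)` an edge
of `A i` and `u j = v j` for all `j ≠ i`. -/
def boxProdPi {n : ℕ} {V : Fin n → Type*} (A : ∀ i, SimpleGraph (V i)) :
    SimpleGraph (∀ i, V i) where
  Adj u v := ∃ i, (A i).Adj (u i) (v i) ∧ ∀ j, j ≠ i → u j = v j
  symm := by
    constructor
    rintro u v ⟨i, hadj, heq⟩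
    exact ⟨i, hadj.symm, fun j hj => (heq j hj).symm⟩
  loopless := by
    constructor
    rintro u ⟨i, hadj, -⟩
    exact (A i).irrefl hadj

lemma tdn_le {V : Type*} [Fintype V] (G : SimpleGraph V) (D : Finset V)
    (hD : IsTotalDomSet G D) : totalDomNum G ≤ D.card :=
  Nat.sInf_le ⟨D, hD, rfl⟩

lemma exists_min_tds {V : Type*} [Fintype V] (G : SimpleGraph V)
    (h : ∀ v : V, ∃ u : V, G.Adj u v) :
    ∃ D : Finset V, IsTotalDomSet G D ∧ D.card = totalDomNum G := by
  have hne : {k : ℕ | ∃ D : Finset V, IsTotalDomSet G D ∧ D.card = k}.Nonempty :=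
    ⟨Finset.univ.card, Finset.univ, fun v => by
      obtain ⟨u, hu⟩ := h v; exact ⟨u, Finset.mem_univ u, hu⟩, rfl⟩
  exact Nat.sInf_mem hne

open scoped Classical in
lemma min_trick {W : Type*} [Fintype W] (G : SimpleGraph W)
    (U : Finset W) (hUcard : U.card = totalDomNum G)
    (ℓ : W → W) (hℓU : ∀ w, ℓ w ∈ U) (hℓadj : ∀ w, G.Adj (ℓ w) w)
    (Q : Finset W) :
    (U.filter (fun u => ∀ w, ℓ w = u → ∃ x ∈ Q, G.Adj x w)).card ≤ Q.card := by
  set T := U.filter (fun u => ∀ w, ℓ w = u → ∃ x ∈ Q, G.Adj x w) with hT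
  have hTDS : IsTotalDomSet G (Q ∪ (U \ T)) := by
    intro w
    by_cases h : ℓ w ∈ T
    · obtain ⟨x, hx, hadj⟩ := (Finset.mem_filter.mp h).2 w rfl
      exact ⟨x, Finset.mem_union_left _ hx, hadj⟩
    · exact ⟨ℓ w, Finset.mem_union_right _ (Finset.mem_sdiff.mpr ⟨hℓU w, h⟩), hℓadj w⟩
  have h1 : totalDomNum G ≤ (Q ∪ (U \ T)).card := tdn_le _ _ hTDS
  have h2 : (Q ∪ (U \ T)).card ≤ Q.card + (U.card - T.card) := by
    refine le_trans (Finset.card_union_le _ _) ?_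
    have : (U \ T).card = U.card - T.card := Finset.card_sdiff_of_subset (Finset.filter_subset _ _)
    omega
  have h3 : T.card ≤ U.card := Finset.card_le_card (Finset.filter_subset _ _)
  omega

open scoped Classical in
lemma key {n : ℕ} {V : Fin n → Type*} [∀ i, Fintype (V i)]
    (A : ∀ i, SimpleGraph (V i))
    (hA : ∀ i, ∀ v : V i, ∃ u : V i, (A i).Adj u v)
    (s : Finset (Fin n)) (z : ∀ i, V i) :
    ∀ S : Finset (∀ i, V i), (∀ x ∈ S, ∀ j ∉ s, x j = z j) →
    ∏ j ∈ s, totalDomNum (A j) ≤ s.card * S.card +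
      (Finset.univ.filter (fun v : ∀ i, V i =>
        (∀ j ∉ s, v j = z j) ∧
        ¬ ∃ x ∈ S, ∃ i ∈ s, (A i).Adj (x i) (v i) ∧ ∀ j, j ≠ i → x j = v j)).card := by
  induction s using Finset.induction_on with
  | empty =>
    intro S hS
    simp only [Finset.prod_empty, Finset.card_empty, zero_mul, zero_add]
    have hz : z ∈ Finset.univ.filter (fun v : ∀ i, V i =>
        (∀ j ∉ (∅ : Finset (Fin n)), v j = z j) ∧
        ¬ ∃ x ∈ S, ∃ i ∈ (∅ : Finset (Fin n)),
          (A i).Adj (x i) (v i) ∧ ∀ j, j ≠ i → x j = v j) := by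
      refine Finset.mem_filter.mpr ⟨Finset.mem_univ z, fun j _ => rfl, ?_⟩
      rintro ⟨x, -, i, hi, -⟩
      exact absurd hi (Finset.notMem_empty i)
    exact Finset.card_pos.mpr ⟨z, hz⟩
  | @insert a t ha IH =>
    intro S hS
    obtain ⟨U, hU, hUcard⟩ := exists_min_tds (A a) (hA a)
    choose ℓ hℓU hℓadj using hU
    -- slabs of S over the cells of the coordinate a
    set Su : V a → Finset (∀ i, V i) := fun u => S.filter (fun x => ℓ (x a) = u) with hSu
    set S'u : V a → Finset (∀ i, V i) :=
      fun u => (Su u).image (fun x => Function.update x a (z a)) with hS'u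
    set Bad : V a → Finset (∀ i, V i) := fun u =>
      Finset.univ.filter (fun v : ∀ i, V i =>
        (∀ j ∉ t, v j = z j) ∧
        ¬ ∃ x ∈ S'u u, ∃ i ∈ t, (A i).Adj (x i) (v i) ∧ ∀ j, j ≠ i → x j = v j) with hBad
    set UncovS : Finset (∀ i, V i) :=
      Finset.univ.filter (fun v : ∀ i, V i =>
        (∀ j ∉ insert a t, v j = z j) ∧
        ¬ ∃ x ∈ S, ∃ i ∈ insert a t,
          (A i).Adj (x i) (v i) ∧ ∀ j, j ≠ i → x j = v j) with hUncovS
    set tFiber : Finset (∀ i, V i) :=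
      Finset.univ.filter (fun q : ∀ i, V i => ∀ j ∉ t, q j = z j) with htFiber
    set Qq : (∀ i, V i) → Finset (V a) := fun q =>
      (S.filter (fun x => ∀ j, j ≠ a → x j = q j)).image (fun x => x a) with hQq
    set bad2 : (∀ i, V i) → Finset (V a) := fun q =>
      U.filter (fun u => q ∈ Bad u ∧
        ¬ ∀ w, ℓ w = u → ∃ x ∈ Qq q, (A a).Adj x w) with hbad2
    -- IH applies to each S'u u
    have hIH : ∀ u : V a, ∏ j ∈ t, totalDomNum (A j) ≤
        t.card * (S'u u).card + (Bad u).card := by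
      intro u
      refine IH (S'u u) ?_
      intro x hx j hj
      simp only [hS'u, Finset.mem_image] at hx
      obtain ⟨x0, hx0, rfl⟩ := hx
      by_cases hja : j = a
      · subst hja; simp
      · rw [Function.update_of_ne hja]
        exact hS x0 ((Finset.mem_filter.mp hx0).1) j (by
          simp only [Finset.mem_insert, not_or]; exact ⟨hja, hj⟩)
    -- sum of slab sizes
    have hdisjSu : ∀ u ∈ U, ∀ u' ∈ U, u ≠ u' → Disjoint (Su u) (Su u') := by
      intro u _ u' _ huu'
      refine Finset.disjoint_left.mpr fun x hx hx' => huu' ?_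
      rw [← (Finset.mem_filter.mp hx).2, (Finset.mem_filter.mp hx').2]
    have hsumSu : ∑ u ∈ U, (Su u).card ≤ S.card := by
      rw [← Finset.card_biUnion hdisjSu]
      exact Finset.card_le_card (Finset.biUnion_subset.mpr fun u _ => Finset.filter_subset _ _)
    have hsumS'u : ∑ u ∈ U, (S'u u).card ≤ S.card :=
      le_trans (Finset.sum_le_sum fun u _ => Finset.card_image_le) hsumSu
    -- swap the double count of Bad
    have hBsub : ∀ u, Bad u = tFiber.filter (fun q => q ∈ Bad u) := by
      intro u
      ext q
      constructor
      · intro hq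
        refine Finset.mem_filter.mpr ⟨?_, hq⟩
        rw [hBad] at hq
        exact Finset.mem_filter.mpr ⟨Finset.mem_univ q, (Finset.mem_filter.mp hq).2.1⟩
      · exact fun hq => (Finset.mem_filter.mp hq).2
    have hswap : ∑ u ∈ U, (Bad u).card =
        ∑ q ∈ tFiber, (U.filter (fun u => q ∈ Bad u)).card := by
      calc ∑ u ∈ U, (Bad u).card
          = ∑ u ∈ U, ∑ q ∈ tFiber, if q ∈ Bad u then 1 else 0 := by
            refine Finset.sum_congr rfl fun u _ => ?_
            conv_lhs => rw [hBsub u]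
            exact Finset.card_filter _ _
        _ = ∑ q ∈ tFiber, ∑ u ∈ U, if q ∈ Bad u then 1 else 0 := Finset.sum_comm
        _ = ∑ q ∈ tFiber, (U.filter (fun u => q ∈ Bad u)).card := by
            exact Finset.sum_congr rfl fun q _ => (Finset.card_filter _ _).symm
    -- per-q split and bounds
    have h5b : ∀ q ∈ tFiber, (U.filter (fun u => q ∈ Bad u)).card ≤
        (Qq q).card + (bad2 q).card := by
      intro q _
      have hsplit : U.filter (fun u => q ∈ Bad u) ⊆
          (U.filter (fun u => ∀ w, ℓ w = u → ∃ x ∈ Qq q, (A a).Adj x w)) ∪ bad2 q := by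
        intro u hu
        obtain ⟨huU, huB⟩ := Finset.mem_filter.mp hu
        by_cases hT : ∀ w, ℓ w = u → ∃ x ∈ Qq q, (A a).Adj x w
        · exact Finset.mem_union_left _ (Finset.mem_filter.mpr ⟨huU, hT⟩)
        · exact Finset.mem_union_right _ (Finset.mem_filter.mpr ⟨huU, huB, hT⟩)
      refine le_trans (Finset.card_le_card hsplit) ?_
      refine le_trans (Finset.card_union_le _ _) ?_
      exact Nat.add_le_add_right (min_trick (A a) U hUcard ℓ hℓU hℓadj (Qq q)) _
    -- columns over distinct base points are disjoint
    have hcoldisj : ∀ q ∈ tFiber, ∀ q' ∈ tFiber, q ≠ q' →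
        ∀ x : ∀ i, V i, (∀ j, j ≠ a → x j = q j) → (∀ j, j ≠ a → x j = q' j) → False := by
      intro q hq q' hq' hne x hx hx'
      refine hne (funext fun j => ?_)
      by_cases hja : j = a
      · rw [hja, (Finset.mem_filter.mp hq).2 a ha, (Finset.mem_filter.mp hq').2 a ha]
      · rw [← hx j hja, hx' j hja]
    have h5c : ∑ q ∈ tFiber, (Qq q).card ≤ S.card := by
      have h1 : ∀ q ∈ tFiber, (Qq q).card ≤
          (S.filter (fun x => ∀ j, j ≠ a → x j = q j)).card :=
        fun q _ => Finset.card_image_le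
      refine le_trans (Finset.sum_le_sum h1) ?_
      rw [← Finset.card_biUnion ?_]
      · exact Finset.card_le_card
          (Finset.biUnion_subset.mpr fun q _ => Finset.filter_subset _ _)
      · intro q hq q' hq' hne
        refine Finset.disjoint_left.mpr fun x hx hx' => ?_
        exact hcoldisj q hq q' hq' hne x (Finset.mem_filter.mp hx).2 (Finset.mem_filter.mp hx').2
    -- the injection from bad2 into uncovered vertices
    have h5d : ∑ q ∈ tFiber, (bad2 q).card ≤ UncovS.card := by
      have hone : ∀ q ∈ tFiber, (bad2 q).card ≤
          (UncovS.filter (fun v => ∀ j, j ≠ a → v j = q j)).card := by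
        intro q hq
        have hqz : ∀ j ∉ t, q j = z j := (Finset.mem_filter.mp hq).2
        set f : V a → (∀ i, V i) := fun u =>
          if h : ∃ w : V a, ℓ w = u ∧ ¬ ∃ x ∈ Qq q, (A a).Adj x w
          then Function.update q a h.choose else q with hf
        refine Finset.card_le_card_of_injOn f ?_ ?_
        · intro u hu
          obtain ⟨huU, hqBad, hnT1⟩ := Finset.mem_filter.mp hu
          have hex : ∃ w : V a, ℓ w = u ∧ ¬ ∃ x ∈ Qq q, (A a).Adj x w := by
            push_neg at hnT1
            obtain ⟨w, hw1, hw2⟩ := hnT1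
            exact ⟨w, hw1, by push_neg; exact hw2⟩
          have hfu : f u = Function.update q a hex.choose := dif_pos hex
          obtain ⟨hw1, hw2⟩ := hex.choose_spec
          set w := hex.choose
          rw [hfu]
          refine Finset.mem_filter.mpr ⟨?_, ?_⟩
          · -- membership in UncovS
            refine Finset.mem_filter.mpr ⟨Finset.mem_univ _, ?_, ?_⟩
            · intro j hj
              have hj' : j ≠ a ∧ j ∉ t := by
                simp only [Finset.mem_insert, not_or] at hj; exact hj
              rw [Function.update_of_ne hj'.1]
              exact hqz j hj'.2
            · rintro ⟨x, hxS, i, hi, hadj, heq⟩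
              rcases Finset.mem_insert.mp hi with hia | hit
              · -- i = a : contradicts the witness w
                subst hia
                refine hw2 ⟨x i, ?_, ?_⟩
                · refine Finset.mem_image.mpr ⟨x, Finset.mem_filter.mpr ⟨hxS, ?_⟩, rfl⟩
                  intro j hj
                  rw [heq j hj, Function.update_of_ne hj]
                · rw [Function.update_self] at hadj
                  exact hadj
              · -- i ∈ t : contradicts q ∈ Bad u
                have hia : i ≠ a := fun h => ha (h ▸ hit)
                have hxa : x a = w := by
                  have := heq a (fun h => hia h.symm)
                  rwa [Function.update_self] at this
                have hxSu : x ∈ Su u := Finset.mem_filter.mpr ⟨hxS, by rw [hxa, hw1]⟩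
                have hxS' : Function.update x a (z a) ∈ S'u u :=
                  Finset.mem_image.mpr ⟨x, hxSu, rfl⟩
                rw [hBad] at hqBad
                refine (Finset.mem_filter.mp hqBad).2.2 ⟨Function.update x a (z a), hxS', i, hit, ?_, ?_⟩
                · rw [Function.update_of_ne hia]
                  have : Function.update q a w i = q i := Function.update_of_ne hia _ _
                  rwa [this] at hadj
                · intro j hj
                  by_cases hja : j = a
                  · rw [hja, Function.update_self, hqz a ha]
                  · rw [Function.update_of_ne hja]
                    have h1 := heq j hj
                    rwa [Function.update_of_ne hja] at h1
          · intro j hj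
            exact Function.update_of_ne hj _ _
        · -- injectivity
          intro u hu u' hu' hfe
          obtain ⟨-, -, hnT1⟩ := Finset.mem_filter.mp hu
          obtain ⟨-, -, hnT1'⟩ := Finset.mem_filter.mp hu'
          have hex : ∃ w : V a, ℓ w = u ∧ ¬ ∃ x ∈ Qq q, (A a).Adj x w := by
            push_neg at hnT1
            obtain ⟨w, hw1, hw2⟩ := hnT1
            exact ⟨w, hw1, by push_neg; exact hw2⟩
          have hex' : ∃ w : V a, ℓ w = u' ∧ ¬ ∃ x ∈ Qq q, (A a).Adj x w := by
            push_neg at hnT1'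
            obtain ⟨w, hw1, hw2⟩ := hnT1'
            exact ⟨w, hw1, by push_neg; exact hw2⟩
          have hfu : f u = Function.update q a hex.choose := dif_pos hex
          have hfu' : f u' = Function.update q a hex'.choose := dif_pos hex'
          rw [hfu, hfu'] at hfe
          have : hex.choose = hex'.choose := by
            have := congrFun hfe a
            rwa [Function.update_self, Function.update_self] at this
          rw [← hex.choose_spec.1, ← hex'.choose_spec.1, this]
      refine le_trans (Finset.sum_le_sum hone) ?_
      rw [← Finset.card_biUnion ?_]
      · exact Finset.card_le_card
          (Finset.biUnion_subset.mpr fun q _ => Finset.filter_subset _ _)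
      · intro q hq q' hq' hne
        refine Finset.disjoint_left.mpr fun x hx hx' => ?_
        exact hcoldisj q hq q' hq' hne x (Finset.mem_filter.mp hx).2 (Finset.mem_filter.mp hx').2
    -- put everything together
    have h5 : ∑ u ∈ U, (Bad u).card ≤ S.card + UncovS.card := by
      rw [hswap]
      calc ∑ q ∈ tFiber, (U.filter (fun u => q ∈ Bad u)).card
          ≤ ∑ q ∈ tFiber, ((Qq q).card + (bad2 q).card) := Finset.sum_le_sum h5b
        _ = (∑ q ∈ tFiber, (Qq q).card) + ∑ q ∈ tFiber, (bad2 q).card :=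
            Finset.sum_add_distrib
        _ ≤ S.card + UncovS.card := add_le_add h5c h5d
    calc ∏ j ∈ insert a t, totalDomNum (A j)
        = U.card * ∏ j ∈ t, totalDomNum (A j) := by
          rw [Finset.prod_insert ha, hUcard]
      _ = ∑ _u ∈ U, ∏ j ∈ t, totalDomNum (A j) := by
          rw [Finset.sum_const, smul_eq_mul]
      _ ≤ ∑ u ∈ U, (t.card * (S'u u).card + (Bad u).card) :=
          Finset.sum_le_sum fun u _ => hIH u
      _ = t.card * (∑ u ∈ U, (S'u u).card) + ∑ u ∈ U, (Bad u).card := by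
          rw [Finset.sum_add_distrib, Finset.mul_sum]
      _ ≤ t.card * S.card + (S.card + UncovS.card) :=
          add_le_add (Nat.mul_le_mul_left _ hsumS'u) h5
      _ = (t.card + 1) * S.card + UncovS.card := by ring
      _ = (insert a t).card * S.card + UncovS.card := by
          rw [Finset.card_insert_of_notMem ha]

/-- `γ_t(A^1)·γ_t(A^2)···γ_t(A^n) ≤ n·γ_t(A^1 □ ⋯ □ A^n)` for graphs without
isolated vertices. -/
theorem prod_totalDomNum_le_mul_totalDomNum_boxProdPi
    {n : ℕ} (hn : 1 ≤ n) {V : Fin n → Type*} [∀ i, Fintype (V i)]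
    (A : ∀ i, SimpleGraph (V i))
    (hA : ∀ i, ∀ v : V i, ∃ u : V i, (A i).Adj u v) :
    ∏ i, totalDomNum (A i) ≤ n * totalDomNum (boxProdPi A) := by
  classical
  by_cases hne : Nonempty (∀ i, V i)
  · obtain ⟨z⟩ := hne
    have hbox : ∀ v : ∀ i, V i, ∃ u, (boxProdPi A).Adj u v := by
      intro v
      obtain ⟨u, hu⟩ := hA ⟨0, hn⟩ (v ⟨0, hn⟩)
      refine ⟨Function.update v ⟨0, hn⟩ u, ⟨0, hn⟩, ?_, fun j hj => Function.update_of_ne hj _ _⟩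
      rwa [Function.update_self]
    obtain ⟨D, hD, hDcard⟩ := exists_min_tds (boxProdPi A) hbox
    have hkey := key A hA Finset.univ z D (fun x _ j hj => absurd (Finset.mem_univ j) hj)
    have hempty : (Finset.univ.filter (fun v : ∀ i, V i =>
        (∀ j ∉ (Finset.univ : Finset (Fin n)), v j = z j) ∧
        ¬ ∃ x ∈ D, ∃ i ∈ (Finset.univ : Finset (Fin n)),
          (A i).Adj (x i) (v i) ∧ ∀ j, j ≠ i → x j = v j)) = ∅ := by
      refine Finset.eq_empty_of_forall_notMem fun v hv => ?_
      obtain ⟨-, -, hnot⟩ := Finset.mem_filter.mp hv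
      obtain ⟨x, hxD, i, hadj, heq⟩ := hD v
      exact hnot ⟨x, hxD, i, Finset.mem_univ i, hadj, heq⟩
    rw [hempty] at hkey
    simp only [Finset.card_empty, add_zero, Finset.card_univ, Fintype.card_fin] at hkey
    rw [hDcard] at hkey
    exact hkey
  · have hi : ∃ i, IsEmpty (V i) := by
      by_contra h
      push_neg at h
      exact hne ⟨fun i => Classical.choice (h i)⟩
    obtain ⟨i0, hi0⟩ := hi
    have h0 : totalDomNum (A i0) = 0 := by
      have hmem : (0 : ℕ) ∈ {k : ℕ | ∃ D : Finset (V i0),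
          IsTotalDomSet (A i0) D ∧ D.card = k} :=
        ⟨∅, fun v => (hi0.false v).elim, rfl⟩
      exact Nat.le_zero.mp (Nat.sInf_le hmem)
    calc ∏ i, totalDomNum (A i) = 0 := Finset.prod_eq_zero (Finset.mem_univ i0) h0
      _ ≤ _ := Nat.zero_le _
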